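/- Fix integers K and r with 1 ≤ r ≤ K. There exists a real K × K matrix B such that (i) every row k of B is supported on the r cyclically consecutive columns {k, k+1, …, k+r−1} (indices mod K), i.e., B k i = 0 whenever i is not among these columns, and (ii) for every subset W of row indices with |W| = K − r + 1, the all-ones row vector (1, 1, …, 1) lies in the real linear span of the rows of B indexed by W. -/
import Mathlib

open Matrix Finset

/-- existence of a gradient code. For `1 ≤ r ≤ K` there is a real
`K × K` encoding matrix `B` whose row `k` is supported on the `r` cyclically
consecutive columns `{k, k+1, …, k+r−1} (mod K)`, and such that for every set
`W` of `K − r + 1` row indices the all-ones vector lies in the span of the rows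
of `B` indexed by `W`. -/
theorem stmt_2 (K r : ℕ) (hr : 1 ≤ r) (hrK : r ≤ K) :
    ∃ B : Matrix (Fin K) (Fin K) ℝ,
      (∀ k i : Fin K, (∀ t : ℕ, t < r → (i : ℕ) ≠ ((k : ℕ) + t) % K) → B k i = 0) ∧
      (∀ W : Finset (Fin K), W.card = K - r + 1 →
        (fun _ : Fin K => (1 : ℝ)) ∈
          Submodule.span ℝ ((fun k : Fin K => B k) '' (W : Set (Fin K)))) := by
  have hK : 0 < K := hr.trans hrK
  set d : ℕ := K - r with hd
  set ν : Fin K → Fin (d+1) → ℝ := fun i m =>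
    if (m : ℕ) < d then ((((i : ℕ) + 1 + (m : ℕ)) % K : ℕ) : ℝ) else ((K : ℕ) : ℝ) with hν
  have hνinj : ∀ i, Function.Injective (ν i) := by
    intro i m₁ m₂ h
    simp only [hν] at h
    by_cases h1 : (m₁ : ℕ) < d <;> by_cases h2 : (m₂ : ℕ) < d <;>
      simp only [h1, h2, if_true, if_false] at h
    · have e1 : ((i : ℕ) + 1 + (m₁ : ℕ)) % K = ((i : ℕ) + 1 + (m₂ : ℕ)) % K :=
        Nat.cast_inj.mp h
      have e2 : ((m₁ : ℕ)) % K = ((m₂ : ℕ)) % K :=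
        Nat.ModEq.add_left_cancel' ((i : ℕ) + 1) e1
      have : (m₁ : ℕ) = (m₂ : ℕ) := by
        rwa [Nat.mod_eq_of_lt (by omega), Nat.mod_eq_of_lt (by omega)] at e2
      exact Fin.ext this
    · exact absurd (Nat.cast_inj.mp h) (by
        have : ((i : ℕ) + 1 + (m₁ : ℕ)) % K < K := Nat.mod_lt _ hK
        omega)
    · exact absurd (Nat.cast_inj.mp h) (by
        have : ((i : ℕ) + 1 + (m₂ : ℕ)) % K < K := Nat.mod_lt _ hK
        omega)
    · exact Fin.ext (by omega)
  set M : Fin K → Matrix (Fin (d+1)) (Fin (d+1)) ℝ := fun i => Matrix.vandermonde (ν i) with hMdef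
  have hM : ∀ i, IsUnit (M i).det := fun i =>
    isUnit_iff_ne_zero.mpr (Matrix.det_vandermonde_ne_zero_iff.mpr (hνinj i))
  set lst : Fin (d+1) := ⟨d, Nat.lt_succ_self d⟩ with hlst
  set A : Fin K → Fin (d+1) → ℝ := fun i => (M i)⁻¹ *ᵥ Pi.single lst 1 with hAdef
  have hA : ∀ i, (M i) *ᵥ A i = Pi.single lst 1 := by
    intro i
    rw [hAdef]
    rw [Matrix.mulVec_mulVec, Matrix.mul_nonsing_inv _ (hM i), Matrix.one_mulVec]
  have hA' : ∀ (i : Fin K) (m : Fin (d+1)),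
      (∑ j : Fin (d+1), ν i m ^ (j : ℕ) * A i j) = (Pi.single lst 1 : Fin (d+1) → ℝ) m := by
    intro i m
    have := congrFun (hA i) m
    simpa [Matrix.mulVec, dotProduct, Matrix.vandermonde, hMdef] using this
  refine ⟨fun k i => ∑ j : Fin (d+1), (((k : ℕ) : ℝ)) ^ (j : ℕ) * A i j, ?_, ?_⟩
  · -- support condition
    intro k i hk
    set a : ℕ := ((i : ℕ) + K - (k : ℕ)) % K with ha
    have haK : a < K := Nat.mod_lt _ hK
    have h1 : ((k : ℕ) + a) % K = (i : ℕ) := by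
      have e1 : ((k : ℕ) + a) % K = ((k : ℕ) + ((i : ℕ) + K - (k : ℕ))) % K := by
        rw [ha, Nat.add_mod_mod]
      have e2 : (k : ℕ) + ((i : ℕ) + K - (k : ℕ)) = (i : ℕ) + K := by omega
      rw [e1, e2, Nat.add_mod_right, Nat.mod_eq_of_lt i.isLt]
    have hra : r ≤ a := by
      by_contra hco
      exact hk a (by omega) h1.symm
    set m : ℕ := K - 1 - a with hm
    have hmd : m < d := by omega
    have hkm : ((i : ℕ) + 1 + m) % K = (k : ℕ) := by
      rcases lt_or_ge ((k : ℕ) + a) K with hc | hc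
      · rw [Nat.mod_eq_of_lt hc] at h1
        have e3 : (i : ℕ) + 1 + m = (k : ℕ) + K := by omega
        rw [e3, Nat.add_mod_right, Nat.mod_eq_of_lt k.isLt]
      · rw [Nat.mod_eq_sub_mod hc, Nat.mod_eq_of_lt (by omega)] at h1
        have e3 : (i : ℕ) + 1 + m = (k : ℕ) := by omega
        rw [e3, Nat.mod_eq_of_lt k.isLt]
    have hmf : (⟨m, by omega⟩ : Fin (d+1)) ≠ lst := by
      simp only [hlst, Fin.ne_iff_vne]
      omega
    have hνm : ν i ⟨m, by omega⟩ = ((k : ℕ) : ℝ) := by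
      simp only [hν, if_pos hmd]
      exact_mod_cast congrArg (Nat.cast : ℕ → ℝ) hkm
    calc (∑ j : Fin (d+1), (((k : ℕ) : ℝ)) ^ (j : ℕ) * A i j)
        = ∑ j : Fin (d+1), ν i ⟨m, by omega⟩ ^ (j : ℕ) * A i j := by rw [hνm]
      _ = (Pi.single lst 1 : Fin (d+1) → ℝ) ⟨m, by omega⟩ := hA' i ⟨m, by omega⟩
      _ = 0 := Pi.single_eq_of_ne hmf 1
  · -- span condition
    intro W hW
    have hWn : W.card = d + 1 := by omega
    set e := W.orderIsoOfFin hWn with he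
    set μ : Fin (d+1) → ℝ := fun m => (((e m : Fin K) : ℕ) : ℝ) with hμ
    have hμinj : Function.Injective μ := by
      intro m₁ m₂ h
      have : ((e m₁ : Fin K) : ℕ) = ((e m₂ : Fin K) : ℕ) := Nat.cast_inj.mp h
      exact e.injective (Subtype.ext (Fin.ext this))
    set N : Matrix (Fin (d+1)) (Fin (d+1)) ℝ := Matrix.vandermonde μ with hNdef
    have hN : IsUnit N.det :=
      isUnit_iff_ne_zero.mpr (Matrix.det_vandermonde_ne_zero_iff.mpr hμinj)
    set lam : Fin (d+1) → ℝ := (fun j : Fin (d+1) => ((K : ℕ) : ℝ) ^ (j : ℕ)) ᵥ* N⁻¹ with hlam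
    have hlamN : lam ᵥ* N = fun j : Fin (d+1) => ((K : ℕ) : ℝ) ^ (j : ℕ) := by
      rw [hlam, Matrix.vecMul_vecMul, Matrix.nonsing_inv_mul _ hN, Matrix.vecMul_one]
    have hlamN' : ∀ j : Fin (d+1),
        (∑ m : Fin (d+1), lam m * μ m ^ (j : ℕ)) = ((K : ℕ) : ℝ) ^ (j : ℕ) := by
      intro j
      have := congrFun hlamN j
      simpa [Matrix.vecMul, dotProduct, Matrix.vandermonde, hNdef] using this
    have key : (fun _ : Fin K => (1 : ℝ)) =
        ∑ m : Fin (d+1), lam m •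
          (fun i : Fin K => ∑ j : Fin (d+1), (((((e m : Fin K)) : ℕ) : ℝ)) ^ (j : ℕ) * A i j) := by
      funext i
      have hup : ν i lst = ((K : ℕ) : ℝ) := by
        simp only [hν, hlst]
        rw [if_neg (by omega)]
      have honev : (∑ j : Fin (d+1), ((K : ℕ) : ℝ) ^ (j : ℕ) * A i j) = 1 := by
        have h2 := hA' i lst
        rw [hup] at h2
        rw [h2, Pi.single_eq_same]
      have hstep : (∑ m : Fin (d+1), lam m * ∑ j : Fin (d+1), μ m ^ (j : ℕ) * A i j)
          = ∑ j : Fin (d+1), (∑ m : Fin (d+1), lam m * μ m ^ (j : ℕ)) * A i j := by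
        simp_rw [Finset.mul_sum, ← mul_assoc]
        rw [Finset.sum_comm]
        simp_rw [Finset.sum_mul]
      simp only [Finset.sum_apply, Pi.smul_apply, smul_eq_mul]
      calc (1 : ℝ) = ∑ j : Fin (d+1), ((K : ℕ) : ℝ) ^ (j : ℕ) * A i j := honev.symm
        _ = ∑ j : Fin (d+1), (∑ m : Fin (d+1), lam m * μ m ^ (j : ℕ)) * A i j := by
            simp_rw [hlamN']
        _ = ∑ m : Fin (d+1), lam m * ∑ j : Fin (d+1), μ m ^ (j : ℕ) * A i j := hstep.symm
        _ = ∑ m : Fin (d+1), lam m *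
              ∑ j : Fin (d+1), (((((e m : Fin K)) : ℕ) : ℝ)) ^ (j : ℕ) * A i j := rfl
    rw [key]
    refine Submodule.sum_smul_mem _ _ (fun m _ => Submodule.subset_span ?_)
    exact ⟨(e m : Fin K), by simp, rfl⟩
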